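/- Let $n$ be even and let $\mu$ be a probability distribution on $\{0,1\}^n$ that is invariant under all permutations of the coordinates and invariant under the global flip $x \mapsto \mathbf{1} - x$. Let $A = \{x : \sum_i x_i \le n/2\}$ and let $A_{n/2} = \{x : \sum_i x_i = n/2\}$. Then for every monotone set $B \subseteq \{0,1\}^n$, $\mu(A \oplus B) \ge \frac{1}{6} - \mu(A_{n/2})$. In particular, when $\mu(A_{n/2})$ is negligible, every monotone set is at $\mu$-distance at least essentially $1/6$ from $A$. -/

import Mathlib

/-- A set `B ⊆ {0,1}^n` is monotone if `x ∈ B` and `x ≤ y` (coordinatewise)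
imply `y ∈ B`. -/
def IsMonotoneSet {n : ℕ} (B : Finset (Fin n → Bool)) : Prop :=
  ∀ x ∈ B, ∀ y : Fin n → Bool, (∀ i, x i ≤ y i) → y ∈ B

/-- Number of coordinates equal to `1`. -/
def countOnes {n : ℕ} (x : Fin n → Bool) : ℕ :=
  (Finset.univ.filter fun i => x i = true).card

lemma countOnes_le {n : ℕ} (x : Fin n → Bool) : countOnes x ≤ n := by
  classical
  have := Finset.card_filter_le (Finset.univ : Finset (Fin n)) (fun i => x i = true)
  simpa [countOnes] using this

lemma countOnes_flip {n : ℕ} (x : Fin n → Bool) :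
    countOnes (fun i => !x i) + countOnes x = n := by
  classical
  have h : (Finset.univ.filter fun i => (!x i) = true) =
      (Finset.univ.filter fun i => ¬ (x i = true)) := by
    apply Finset.filter_congr; intro i _; simp
  have := Finset.card_filter_add_card_filter_not (s := (Finset.univ : Finset (Fin n)))
      (fun i => x i = true)
  simp only [Finset.card_univ, Fintype.card_fin] at this
  have h2 : (Finset.univ.filter fun i => x i = false) =
      (Finset.univ.filter fun a => ¬ x a = true) := by
    apply Finset.filter_congr; intro i _; simp
  simp [countOnes, h, h2]
  omega

lemma countOnes_update_true {n : ℕ} {x : Fin n → Bool} {i : Fin n} (h : x i = false) :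
    countOnes (Function.update x i true) = countOnes x + 1 := by
  classical
  have hset : (Finset.univ.filter fun j => (Function.update x i true) j = true) =
      insert i (Finset.univ.filter fun j => x j = true) := by
    ext j
    by_cases hj : j = i <;> simp [Function.update, hj, h]
  rw [countOnes, hset, Finset.card_insert_of_notMem (by simp [h])]
  rfl

lemma countOnes_update_false {n : ℕ} {y : Fin n → Bool} {i : Fin n} (h : y i = true) :
    countOnes (Function.update y i false) + 1 = countOnes y := by
  classical
  have hset : (Finset.univ.filter fun j => (Function.update y i false) j = true) =
      (Finset.univ.filter fun j => y j = true).erase i := by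
    ext j
    by_cases hj : j = i <;> simp [Function.update, hj]
  rw [countOnes, hset, Finset.card_erase_of_mem (by simp [h])]
  have : 0 < countOnes y := Finset.card_pos.mpr ⟨i, by simp [h]⟩
  unfold countOnes at *
  omega

lemma card_false_filter {n : ℕ} (x : Fin n → Bool) :
    (Finset.univ.filter fun i => x i = false).card = n - countOnes x := by
  classical
  have h2 : (Finset.univ.filter fun i => x i = false) =
      (Finset.univ.filter fun a => ¬ x a = true) := by
    apply Finset.filter_congr; intro i _; simp
  have := Finset.card_filter_add_card_filter_not (s := (Finset.univ : Finset (Fin n)))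
      (fun i => x i = true)
  simp only [Finset.card_univ, Fintype.card_fin] at this
  rw [h2]
  unfold countOnes at *
  omega

lemma ones_subset_of_le {n : ℕ} {x y : Fin n → Bool} (hle : ∀ i, x i ≤ y i) :
    (Finset.univ.filter fun i => x i = true) ⊆ (Finset.univ.filter fun i => y i = true) := by
  intro i hi
  simp only [Finset.mem_filter, Finset.mem_univ, true_and] at hi ⊢
  have h := hle i
  rw [hi] at h
  exact Bool.eq_true_of_true_le h

lemma eq_update_of_le {n : ℕ} {x y : Fin n → Bool} (hle : ∀ i, x i ≤ y i)
    (hc : countOnes y = countOnes x + 1) :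
    ∃ i, x i = false ∧ y = Function.update x i true := by
  classical
  have hsub := ones_subset_of_le hle
  have hcard : ((Finset.univ.filter fun i => y i = true) \
      (Finset.univ.filter fun i => x i = true)).card = 1 := by
    rw [Finset.card_sdiff_of_subset hsub]
    unfold countOnes at hc
    omega
  obtain ⟨i, hi⟩ := Finset.card_eq_one.mp hcard
  have hiy : y i = true ∧ ¬ x i = true := by
    have : i ∈ (Finset.univ.filter fun i => y i = true) \
        (Finset.univ.filter fun i => x i = true) := by rw [hi]; exact Finset.mem_singleton_self i
    simpa using this
  refine ⟨i, by simpa using hiy.2, ?_⟩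
  funext l
  by_cases hl : l = i
  · subst hl; simp [Function.update, hiy.1]
  · simp only [Function.update, dif_neg hl]
    cases hxl : x l
    · cases hyl : y l
      · rfl
      · exfalso
        have : l ∈ (Finset.univ.filter fun i => y i = true) \
            (Finset.univ.filter fun i => x i = true) := by simp [hxl, hyl]
        rw [hi, Finset.mem_singleton] at this
        exact hl this
    · have h := hle l; rw [hxl] at h
      exact Bool.eq_true_of_true_le h

lemma card_up {n : ℕ} (x : Fin n → Bool) (j : ℕ) (hx : countOnes x = j) :
    (Finset.univ.filter fun y : Fin n → Bool =>
      countOnes y = j + 1 ∧ ∀ i, x i ≤ y i).card = n - j := by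
  classical
  have key : (Finset.univ.filter fun i => x i = false).card =
      (Finset.univ.filter fun y : Fin n → Bool =>
        countOnes y = j + 1 ∧ ∀ i, x i ≤ y i).card := by
    apply Finset.card_bij (fun i _ => Function.update x i true)
    · intro i hi
      simp only [Finset.mem_filter, Finset.mem_univ, true_and] at hi ⊢
      refine ⟨by rw [countOnes_update_true hi, hx], ?_⟩
      intro l
      by_cases hl : l = i <;> simp [Function.update, hl]
    · intro a ha b hb hab
      simp only [Finset.mem_filter, Finset.mem_univ, true_and] at ha hb
      by_contra hne
      have := congrFun hab a
      simp [Function.update, Ne.symm hne, ha] at this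
      exact hne this
    · intro y hy
      simp only [Finset.mem_filter, Finset.mem_univ, true_and] at hy
      obtain ⟨i, hif, hiu⟩ := eq_update_of_le hy.2 (by omega)
      exact ⟨i, by simp [hif], hiu.symm⟩
  rw [← key, card_false_filter, hx]

lemma card_down {n : ℕ} (y : Fin n → Bool) (j : ℕ) (hy : countOnes y = j + 1) :
    (Finset.univ.filter fun x : Fin n → Bool =>
      countOnes x = j ∧ ∀ i, x i ≤ y i).card = j + 1 := by
  classical
  have key : (Finset.univ.filter fun i => y i = true).card =
      (Finset.univ.filter fun x : Fin n → Bool =>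
        countOnes x = j ∧ ∀ i, x i ≤ y i).card := by
    apply Finset.card_bij (fun i _ => Function.update y i false)
    · intro i hi
      simp only [Finset.mem_filter, Finset.mem_univ, true_and] at hi ⊢
      have hc := countOnes_update_false hi
      refine ⟨by omega, ?_⟩
      intro l
      by_cases hl : l = i <;> simp [Function.update, hl]
    · intro a ha b hb hab
      simp only [Finset.mem_filter, Finset.mem_univ, true_and] at ha hb
      by_contra hne
      have := congrFun hab a
      simp [Function.update, Ne.symm hne, ha] at this
      exact hne this
    · intro x hx
      simp only [Finset.mem_filter, Finset.mem_univ, true_and] at hx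
      obtain ⟨i, hif, hiu⟩ := eq_update_of_le hx.2 (by omega)
      refine ⟨i, ?_, ?_⟩
      · have : y i = true := by rw [hiu]; simp [Function.update]
        simp [this]
      · -- x = update y i false
        rw [hiu]
        funext l
        by_cases hl : l = i
        · subst hl; simp [Function.update, hif]
        · simp [Function.update, hl]
  rw [← key]
  exact hy

lemma local_lym {n : ℕ} (B : Finset (Fin n → Bool)) (hB : IsMonotoneSet B) (j : ℕ) :
    (n - j) * (B.filter fun x => countOnes x = j).card
      ≤ (j + 1) * (B.filter fun x => countOnes x = j + 1).card := by
  classical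
  set S : Finset ((Fin n → Bool) × (Fin n → Bool)) :=
    (B ×ˢ B).filter (fun p => countOnes p.1 = j ∧ countOnes p.2 = j + 1 ∧ ∀ i, p.1 i ≤ p.2 i)
    with hS
  have h1 : S.card = ∑ x ∈ B.filter (fun x => countOnes x = j),
      (S.filter fun p => p.1 = x).card := by
    apply Finset.card_eq_sum_card_fiberwise
    intro p hp
    simp only [hS, Finset.mem_coe, Finset.mem_filter, Finset.mem_product] at hp
    simp [Finset.mem_filter, hp.1.1, hp.2.1]
  have h2 : S.card = ∑ y ∈ B.filter (fun y => countOnes y = j + 1),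
      (S.filter fun p => p.2 = y).card := by
    apply Finset.card_eq_sum_card_fiberwise
    intro p hp
    simp only [hS, Finset.mem_coe, Finset.mem_filter, Finset.mem_product] at hp
    simp [Finset.mem_filter, hp.1.2, hp.2.2.1]
  have hfib1 : ∀ x ∈ B.filter (fun x => countOnes x = j),
      (S.filter fun p => p.1 = x).card = n - j := by
    intro x hx
    simp only [Finset.mem_filter] at hx
    rw [← card_up x j hx.2]
    apply Finset.card_bij (fun p _ => p.2)
    · intro p hp
      simp only [hS, Finset.mem_filter, Finset.mem_product] at hp
      obtain ⟨hmem, heq⟩ := hp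
      subst heq
      simp only [Finset.mem_filter, Finset.mem_univ, true_and]
      exact ⟨hmem.2.2.1, hmem.2.2.2⟩
    · intro a ha b hb hab
      simp only [hS, Finset.mem_filter, Finset.mem_product] at ha hb
      exact Prod.ext (ha.2.trans hb.2.symm) hab
    · intro y hy
      simp only [Finset.mem_filter, Finset.mem_univ, true_and] at hy
      refine ⟨(x, y), ?_, rfl⟩
      simp only [hS, Finset.mem_filter, Finset.mem_product]
      exact ⟨⟨⟨hx.1, hB x hx.1 y hy.2⟩, hx.2, hy.1, hy.2⟩, trivial⟩
  have hfib2 : ∀ y ∈ B.filter (fun y => countOnes y = j + 1),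
      (S.filter fun p => p.2 = y).card ≤ j + 1 := by
    intro y hy
    simp only [Finset.mem_filter] at hy
    rw [← card_down y j hy.2]
    apply Finset.card_le_card_of_injOn (fun p => p.1)
    · intro p hp
      simp only [hS, Finset.mem_coe, Finset.mem_filter, Finset.mem_product] at hp
      obtain ⟨hmem, heq⟩ := hp
      subst heq
      simp only [Finset.mem_coe, Finset.mem_filter, Finset.mem_univ, true_and]
      exact ⟨hmem.2.1, hmem.2.2.2⟩
    · intro a ha b hb hab
      simp only [Finset.coe_filter, Set.mem_setOf_eq] at ha hb
      exact Prod.ext hab (ha.2.trans hb.2.symm)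
  calc (n - j) * (B.filter fun x => countOnes x = j).card
      = ∑ x ∈ B.filter (fun x => countOnes x = j), (n - j) := by
        rw [Finset.sum_const, smul_eq_mul, Nat.mul_comm]
    _ = S.card := by
        rw [h1]; apply Finset.sum_congr rfl; intro x hx; exact (hfib1 x hx).symm
    _ ≤ ∑ y ∈ B.filter (fun y => countOnes y = j + 1), (j + 1) := by
        rw [h2]; exact Finset.sum_le_sum hfib2
    _ = (j + 1) * (B.filter fun x => countOnes x = j + 1).card := by
        rw [Finset.sum_const, smul_eq_mul, Nat.mul_comm]

lemma density_chain {n : ℕ} (B : Finset (Fin n → Bool)) (hB : IsMonotoneSet B)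
    (k l : ℕ) (hkl : k ≤ l) :
    (B.filter fun x => countOnes x = k).card * Nat.choose n l
      ≤ (B.filter fun x => countOnes x = l).card * Nat.choose n k := by
  induction l with
  | zero => interval_cases k; exact le_refl _
  | succ l ih =>
    rcases Nat.lt_or_ge k (l + 1) with h | h
    · have hkl' : k ≤ l := by omega
      have h1 := ih hkl'
      have h2 := local_lym B hB l
      have hid := Nat.choose_succ_right_eq n l
      refine Nat.le_of_mul_le_mul_right ?_ (Nat.succ_pos l)
      calc (B.filter fun x => countOnes x = k).card * Nat.choose n (l + 1) * (l + 1)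
          = (B.filter fun x => countOnes x = k).card * (Nat.choose n (l + 1) * (l + 1)) := by ring
        _ = (B.filter fun x => countOnes x = k).card * Nat.choose n l * (n - l) := by
            rw [hid]; ring
        _ ≤ (B.filter fun x => countOnes x = l).card * Nat.choose n k * (n - l) :=
            Nat.mul_le_mul_right _ h1
        _ = ((n - l) * (B.filter fun x => countOnes x = l).card) * Nat.choose n k := by ring
        _ ≤ ((l + 1) * (B.filter fun x => countOnes x = l + 1).card) * Nat.choose n k :=
            Nat.mul_le_mul_right _ h2
        _ = (B.filter fun x => countOnes x = l + 1).card * Nat.choose n k * (l + 1) := by ring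
    · have : k = l + 1 := by omega
      subst this
      exact le_refl _

lemma card_layer_le {n : ℕ} (B : Finset (Fin n → Bool)) (hB : IsMonotoneSet B)
    (k : ℕ) (h2k : 2 * k ≤ n) :
    (B.filter fun x => countOnes x = k).card ≤ (B.filter fun x => countOnes x = n - k).card := by
  have hkn : k ≤ n := by omega
  have h := density_chain B hB k (n - k) (by omega)
  rw [Nat.choose_symm hkn] at h
  exact Nat.le_of_mul_le_mul_right h (Nat.choose_pos hkn)

lemma exists_perm_layer {n : ℕ} {x y : Fin n → Bool} (h : countOnes x = countOnes y) :
    ∃ σ : Equiv.Perm (Fin n), ∀ i, y (σ i) = x i := by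
  classical
  have hc : Fintype.card {i // x i = true} = Fintype.card {i // y i = true} := by
    rw [Fintype.card_subtype, Fintype.card_subtype]; exact h
  have hc' : Fintype.card {i // ¬ x i = true} = Fintype.card {i // ¬ y i = true} := by
    rw [Fintype.card_subtype_compl, Fintype.card_subtype_compl, hc]
  let e1 : {i // x i = true} ≃ {i // y i = true} := Fintype.equivOfCardEq hc
  let e2 : {i // ¬ x i = true} ≃ {i // ¬ y i = true} := Fintype.equivOfCardEq hc'
  refine ⟨(Equiv.sumCompl (fun i => x i = true)).symm.trans
    ((e1.sumCongr e2).trans (Equiv.sumCompl (fun i => y i = true))), ?_⟩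
  intro i
  by_cases hx : x i = true
  · rw [Equiv.trans_apply, Equiv.trans_apply,
      Equiv.sumCompl_symm_apply_of_pos (p := fun j => x j = true) hx, Equiv.sumCongr_apply]
    simp only [Sum.map_inl, Equiv.sumCompl_apply_inl]
    rw [hx, (e1 ⟨i, hx⟩).2]
  · rw [Equiv.trans_apply, Equiv.trans_apply,
      Equiv.sumCompl_symm_apply_of_neg (p := fun j => x j = true) hx, Equiv.sumCongr_apply]
    simp only [Sum.map_inr, Equiv.sumCompl_apply_inr]
    have h2 := (e2 ⟨i, hx⟩).2
    simp only [Bool.not_eq_true] at hx h2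
    rw [hx, h2]

lemma mu_layer_const {n : ℕ} (μ : (Fin n → Bool) → ℝ)
    (hperm : ∀ σ : Equiv.Perm (Fin n), ∀ x : Fin n → Bool, μ (x ∘ σ) = μ x)
    {x y : Fin n → Bool} (h : countOnes x = countOnes y) : μ x = μ y := by
  obtain ⟨σ, hσ⟩ := exists_perm_layer h
  have : y ∘ σ = x := funext hσ
  rw [← hperm σ y, this]

/-- For even `n`, an exchangeable and flip-invariant probability distribution
`μ` on `{0,1}^n`, `A = {∑ x_i ≤ n/2}` and `A_{n/2} = {∑ x_i = n/2}`:
every monotone `B` satisfies `μ(A ⊕ B) ≥ 1/6 - μ(A_{n/2})`. -/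
theorem far_from_majority {n : ℕ} (hn : Even n) (μ : (Fin n → Bool) → ℝ)
    (hnn : ∀ x, 0 ≤ μ x) (hsum : ∑ x : Fin n → Bool, μ x = 1)
    (hperm : ∀ σ : Equiv.Perm (Fin n), ∀ x : Fin n → Bool, μ (x ∘ σ) = μ x)
    (hflip : ∀ x : Fin n → Bool, μ (fun i => !x i) = μ x)
    (B : Finset (Fin n → Bool)) (hB : IsMonotoneSet B) :
    ∑ x ∈ symmDiff (Finset.univ.filter fun x : Fin n → Bool => 2 * countOnes x ≤ n) B, μ x
      ≥ 1 / 6 - ∑ x ∈ Finset.univ.filter (fun x : Fin n → Bool => 2 * countOnes x = n), μ x := by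
  classical
  set A : Finset (Fin n → Bool) := Finset.univ.filter fun x => 2 * countOnes x ≤ n with hA
  set Alow : Finset (Fin n → Bool) := Finset.univ.filter fun x => 2 * countOnes x < n with hAlow
  set Ahigh : Finset (Fin n → Bool) := Finset.univ.filter fun x => n < 2 * countOnes x with hAhigh
  set M : Finset (Fin n → Bool) := Finset.univ.filter fun x => 2 * countOnes x = n with hM
  -- flip symmetry : sum over Ahigh equals sum over Alow
  have hflipsum : ∑ x ∈ Ahigh, μ x = ∑ x ∈ Alow, μ x := by
    apply Finset.sum_nbij' (fun x => fun i => !x i) (fun x => fun i => !x i)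
    · intro x hx
      simp only [hAhigh, Finset.mem_filter, Finset.mem_univ, true_and] at hx
      simp only [hAlow, Finset.mem_filter, Finset.mem_univ, true_and]
      have h1 := countOnes_flip x
      have h2 := countOnes_le x
      omega
    · intro x hx
      simp only [hAlow, Finset.mem_filter, Finset.mem_univ, true_and] at hx
      simp only [hAhigh, Finset.mem_filter, Finset.mem_univ, true_and]
      have h1 := countOnes_flip x
      have h2 := countOnes_le x
      omega
    · intro x _; funext i; simp
    · intro x _; funext i; simp
    · intro x _; exact (hflip x).symm
  -- partition of the total mass
  have hpart : 2 * (∑ x ∈ Alow, μ x) + ∑ x ∈ M, μ x = 1 := by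
    have h1 := Finset.sum_filter_add_sum_filter_not (Finset.univ : Finset (Fin n → Bool))
      (fun x => 2 * countOnes x < n) μ
    have h2 := Finset.sum_filter_add_sum_filter_not
      (Finset.univ.filter fun x : Fin n → Bool => ¬ 2 * countOnes x < n)
      (fun x => 2 * countOnes x = n) μ
    have e1 : ((Finset.univ.filter fun x : Fin n → Bool => ¬ 2 * countOnes x < n).filter
        fun x => 2 * countOnes x = n) = M := by
      rw [hM]; ext x; simp only [Finset.filter_filter, Finset.mem_filter, Finset.mem_univ, true_and]
      omega
    have e2 : ((Finset.univ.filter fun x : Fin n → Bool => ¬ 2 * countOnes x < n).filter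
        fun x => ¬ 2 * countOnes x = n) = Ahigh := by
      rw [hAhigh]; ext x
      simp only [Finset.filter_filter, Finset.mem_filter, Finset.mem_univ, true_and]
      omega
    rw [e1, e2] at h2
    rw [hsum] at h1
    rw [← h2, hflipsum] at h1
    linarith
  -- low/high layer decompositions of B-sums
  set K : Finset ℕ := (Finset.range (n + 1)).filter fun k => 2 * k < n with hK
  have hlowdec : ∑ x ∈ B.filter (fun x => 2 * countOnes x < n), μ x
      = ∑ k ∈ K, ∑ x ∈ B.filter (fun x => countOnes x = k), μ x := by
    rw [← Finset.sum_fiberwise_of_maps_to (g := countOnes) (t := K) ?_ μ]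
    · apply Finset.sum_congr rfl
      intro k hk
      simp only [hK, Finset.mem_filter, Finset.mem_range] at hk
      apply Finset.sum_congr _ (fun _ _ => rfl)
      rw [Finset.filter_filter]
      apply Finset.filter_congr
      intro x _
      constructor
      · exact fun h => h.2
      · intro h; exact ⟨by omega, h⟩
    · intro x hx
      simp only [Finset.mem_filter] at hx
      simp only [hK, Finset.mem_filter, Finset.mem_range]
      have := countOnes_le x
      omega
  have hhighdec : ∑ x ∈ B.filter (fun x => n < 2 * countOnes x), μ x
      = ∑ k ∈ K, ∑ x ∈ B.filter (fun x => countOnes x = n - k), μ x := by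
    rw [← Finset.sum_fiberwise_of_maps_to (g := fun x => n - countOnes x) (t := K) ?_ μ]
    · apply Finset.sum_congr rfl
      intro k hk
      simp only [hK, Finset.mem_filter, Finset.mem_range] at hk
      apply Finset.sum_congr _ (fun _ _ => rfl)
      rw [Finset.filter_filter]
      apply Finset.filter_congr
      intro x _
      have := countOnes_le x
      constructor
      · intro h; omega
      · intro h; omega
    · intro x hx
      simp only [Finset.mem_filter] at hx
      simp only [hK, Finset.mem_filter, Finset.mem_range]
      have := countOnes_le x
      omega
  -- per-layer comparison
  have hlayer : ∀ k ∈ K, ∑ x ∈ B.filter (fun x => countOnes x = k), μ x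
      ≤ ∑ x ∈ B.filter (fun x => countOnes x = n - k), μ x := by
    intro k hk
    simp only [hK, Finset.mem_filter, Finset.mem_range] at hk
    rcases Finset.eq_empty_or_nonempty (B.filter (fun x => countOnes x = k)) with he | ⟨x₀, hx₀⟩
    · rw [he, Finset.sum_empty]
      exact Finset.sum_nonneg fun x _ => hnn x
    · simp only [Finset.mem_filter] at hx₀
      have hLHS : ∑ x ∈ B.filter (fun x => countOnes x = k), μ x
          = (B.filter (fun x => countOnes x = k)).card * μ x₀ := by
        rw [Finset.sum_congr rfl (fun x hx => ?_), Finset.sum_const, nsmul_eq_mul]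
        simp only [Finset.mem_filter] at hx
        exact mu_layer_const μ hperm (by rw [hx.2, hx₀.2])
      have hRHS : ∑ x ∈ B.filter (fun x => countOnes x = n - k), μ x
          = (B.filter (fun x => countOnes x = n - k)).card * μ x₀ := by
        rw [Finset.sum_congr rfl (fun x hx => ?_), Finset.sum_const, nsmul_eq_mul]
        simp only [Finset.mem_filter] at hx
        have hcf : countOnes (fun i => !x i) = k := by
          have h1 := countOnes_flip x
          have h2 := countOnes_le x
          omega
        calc μ x = μ (fun i => !x i) := (hflip x).symm
          _ = μ x₀ := mu_layer_const μ hperm (by rw [hcf, hx₀.2])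
      rw [hLHS, hRHS]
      apply mul_le_mul_of_nonneg_right _ (hnn x₀)
      exact_mod_cast card_layer_le B hB k (by omega)
  have hBcomp : ∑ x ∈ B.filter (fun x => 2 * countOnes x < n), μ x
      ≤ ∑ x ∈ B.filter (fun x => n < 2 * countOnes x), μ x := by
    rw [hlowdec, hhighdec]
    exact Finset.sum_le_sum hlayer
  -- the two disjoint pieces of the symmetric difference
  have hsplit : ∑ x ∈ Alow, μ x
      = ∑ x ∈ Alow.filter (fun x => x ∈ B), μ x + ∑ x ∈ Alow.filter (fun x => x ∉ B), μ x := by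
    rw [Finset.sum_filter_add_sum_filter_not]
  have hABlow : Alow.filter (fun x => x ∈ B) = B.filter (fun x => 2 * countOnes x < n) := by
    ext x
    simp only [hAlow, Finset.filter_filter, Finset.mem_filter, Finset.mem_univ, true_and]
    tauto
  have hsub : (Alow.filter (fun x => x ∉ B)) ∪ (B.filter (fun x => n < 2 * countOnes x))
      ⊆ symmDiff A B := by
    intro x hx
    rw [Finset.mem_union] at hx
    rw [Finset.mem_symmDiff]
    rcases hx with hx | hx
    · simp only [hAlow, Finset.filter_filter, Finset.mem_filter, Finset.mem_univ, true_and] at hx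
      left
      refine ⟨?_, hx.2⟩
      simp only [hA, Finset.mem_filter, Finset.mem_univ, true_and]
      omega
    · simp only [Finset.mem_filter] at hx
      right
      refine ⟨hx.1, ?_⟩
      simp only [hA, Finset.mem_filter, Finset.mem_univ, true_and]
      omega
  have hdisj : Disjoint (Alow.filter (fun x => x ∉ B)) (B.filter (fun x => n < 2 * countOnes x)) := by
    rw [Finset.disjoint_left]
    intro x hx hx'
    simp only [hAlow, Finset.filter_filter, Finset.mem_filter, Finset.mem_univ, true_and] at hx
    simp only [Finset.mem_filter] at hx'
    omega
  have hmain : ∑ x ∈ symmDiff A B, μ x ≥ ∑ x ∈ Alow, μ x := by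
    calc ∑ x ∈ Alow, μ x
        = ∑ x ∈ Alow.filter (fun x => x ∈ B), μ x + ∑ x ∈ Alow.filter (fun x => x ∉ B), μ x :=
          hsplit
      _ ≤ ∑ x ∈ B.filter (fun x => n < 2 * countOnes x), μ x
            + ∑ x ∈ Alow.filter (fun x => x ∉ B), μ x := by
          rw [hABlow]
          exact add_le_add_left hBcomp _
      _ = ∑ x ∈ (Alow.filter (fun x => x ∉ B)) ∪ (B.filter (fun x => n < 2 * countOnes x)),
            μ x := by
          rw [Finset.sum_union hdisj]; ring
      _ ≤ ∑ x ∈ symmDiff A B, μ x :=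
          Finset.sum_le_sum_of_subset_of_nonneg hsub (fun x _ _ => hnn x)
  have hMnn : 0 ≤ ∑ x ∈ M, μ x := Finset.sum_nonneg fun x _ => hnn x
  linarith
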